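/- Let A ⊆ ℝ, f : A → ℝ, a, L ∈ ℝ. Then L is the T₆ limit of f at a if and only if there exist functions g, h : A → ℝ and δ₀ > 0 such that f(x) = g(x) + h(x) for all x ∈ A, g has classical limit L at a, and the set {x ∈ ((a−δ₀, a+δ₀) \ {a}) ∩ A : h(x) ≠ 0} has Lebesgue measure zero. -/

import Mathlib

open Set

/-- Exceptional set for the limit of `f` restricted to `A` at `a` with value `L`. -/
def excepSet (A : Set ℝ) (f : ℝ → ℝ) (a L δ ε : ℝ) : Set ℝ :=
  {x | x ∈ Set.Ioo (a - δ) (a + δ) ∧ x ≠ a ∧ x ∈ A ∧ ε ≤ |f x - L|}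

theorem stmt_19 (A : Set ℝ) (f : ℝ → ℝ) (a L : ℝ) :
    (∀ ε > 0, ∃ δ > 0, MeasureTheory.volume (excepSet A f a L δ ε) = 0) ↔
    (∃ (g h : ℝ → ℝ) (δ₀ : ℝ), 0 < δ₀ ∧ (∀ x ∈ A, f x = g x + h x) ∧
      (∀ ε > 0, ∃ δ > 0, excepSet A g a L δ ε = ∅) ∧
      MeasureTheory.volume {x | x ∈ Set.Ioo (a - δ₀) (a + δ₀) ∧ x ≠ a ∧ x ∈ A ∧ h x ≠ 0} = 0) := by
  constructor
  · intro H
    choose δ hδpos hδ using fun n : ℕ => H (1/(n+1)) (by positivity)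
    set N : Set ℝ := ⋃ n : ℕ, excepSet A f a L (δ n) (1/(n+1)) with hN
    have hNvol : MeasureTheory.volume N = 0 :=
      MeasureTheory.measure_iUnion_null fun n => by simpa using hδ n
    classical
    refine ⟨fun x => if x ∈ N then L else f x, fun x => if x ∈ N then f x - L else 0,
      δ 0, hδpos 0, ?_, ?_, ?_⟩
    · intro x hx; by_cases hxN : x ∈ N <;> simp [hxN]
    · intro ε hε
      obtain ⟨n, hn⟩ := exists_nat_one_div_lt hε
      refine ⟨δ n, hδpos n, ?_⟩
      ext x
      simp only [excepSet, mem_setOf_eq, mem_empty_iff_false, iff_false]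
      rintro ⟨h1, h2, h3, h4⟩
      by_cases hxN : x ∈ N
      · simp [hxN] at h4; linarith
      · simp only [hxN, if_false] at h4
        have hx : x ∉ excepSet A f a L (δ n) (1/(n+1)) := fun hc => hxN (mem_iUnion.mpr ⟨n, hc⟩)
        simp only [excepSet, mem_setOf_eq, not_and, not_le] at hx
        have := hx h1 h2 h3
        linarith
    · refine le_antisymm (le_trans (MeasureTheory.measure_mono ?_) hNvol.le) zero_le
      rintro x ⟨_, _, _, hx4⟩
      by_contra hxN
      simp [hxN] at hx4
  · rintro ⟨g, h, δ₀, hδ₀, hfg, hg, hh⟩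
    intro ε hε
    obtain ⟨δ, hδpos, hδ⟩ := hg ε hε
    refine ⟨min δ δ₀, lt_min hδpos hδ₀, ?_⟩
    refine le_antisymm (le_trans (MeasureTheory.measure_mono ?_) hh.le) zero_le
    rintro x ⟨hx1, hx2, hx3, hx4⟩
    have hmr := min_le_right δ δ₀
    have hml := min_le_left δ δ₀
    have hx1' : x ∈ Set.Ioo (a - δ₀) (a + δ₀) :=
      ⟨by linarith [hx1.1], by linarith [hx1.2]⟩
    refine ⟨hx1', hx2, hx3, ?_⟩
    intro hh0
    have hxg : x ∈ excepSet A g a L δ ε := by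
      refine ⟨⟨by linarith [hx1.1], by linarith [hx1.2]⟩, hx2, hx3, ?_⟩
      have hf := hfg x hx3
      rw [hf, hh0, add_zero] at hx4
      exact hx4
    rw [hδ] at hxg; exact hxg
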